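/- Let H : E → ℝ be differentiable and let G : ℝ × E → ℝ be Fréchet differentiable. Write ∂_t G(t,x) for the derivative of s ↦ G(s,x) at t and ∇_x G(t,x) for the Riesz gradient of y ↦ G(t,y) at x. Assume the conservation condition ∂_t G(t,x) + ⟪∇_x G(t,x), σ (gradient H x)⟫ = 0 for all t ∈ ℝ and x ∈ E. Then for every curve z : ℝ → E such that z has derivative σ (gradient H (z t)) at every t (an integral curve of the Hamiltonian vector field of H), the function t ↦ G(t, z t) is constant on ℝ. (This is the conservation law dG/dt = ∂G/∂t + {G, H} = 0 satisfied by the generators of symmetries in the paper's Noether theorems.) -/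

import Mathlib

open RealInnerProductSpace

/-- A (possibly time-dependent) generator `G` satisfying the conservation condition
`∂G/∂t + {G, H} = 0` is constant along every integral curve of the Hamiltonian
vector field of `H`. -/
theorem conserved_generator_constant_along_flow
    {E : Type*} [NormedAddCommGroup E] [InnerProductSpace ℝ E] [CompleteSpace E]
    (σ : E →L[ℝ] E)
    (hσ : ∀ x y : E, ⟪σ x, y⟫ = -⟪x, σ y⟫)
    (H : E → ℝ) (hH : Differentiable ℝ H)
    (G : ℝ × E → ℝ) (hGdiff : Differentiable ℝ G)
    (hcons : ∀ (t : ℝ) (x : E),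
      deriv (fun s => G (s, x)) t
        + ⟪gradient (fun y => G (t, y)) x, σ (gradient H x)⟫ = 0) :
    ∀ z : ℝ → E, (∀ t : ℝ, HasDerivAt z (σ (gradient H (z t))) t) →
      ∀ s t : ℝ, G (s, z s) = G (t, z t) := by
  intro z hz s t
  have key : ∀ u : ℝ, HasDerivAt (fun r => G (r, z r)) 0 u := by
    intro u
    set v : E := σ (gradient H (z u)) with hv
    have hG : HasFDerivAt G (fderiv ℝ G (u, z u)) (u, z u) := (hGdiff _).hasFDerivAt
    have hcurve : HasDerivAt (fun r => ((r, z r) : ℝ × E)) (1, v) u :=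
      HasDerivAt.prodMk (hasDerivAt_id u) (hz u)
    have hcomp := hG.comp_hasDerivAt u hcurve
    -- time partial derivative
    have htime : HasDerivAt (fun r => G (r, z u)) (fderiv ℝ G (u, z u) (1, 0)) u := by
      have h1 : HasDerivAt (fun r => ((r, z u) : ℝ × E)) (1, 0) u :=
        HasDerivAt.prodMk (hasDerivAt_id u) (hasDerivAt_const u (z u))
      exact hG.comp_hasDerivAt u h1
    have htime' : deriv (fun r => G (r, z u)) u = fderiv ℝ G (u, z u) (1, 0) :=
      htime.deriv
    -- space partial derivative
    have hspace : HasFDerivAt (fun y => G (u, y))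
        ((fderiv ℝ G (u, z u)).comp ((ContinuousLinearMap.inr ℝ ℝ E))) (z u) := by
      have h2 : HasFDerivAt (fun y => ((u, y) : ℝ × E))
          (ContinuousLinearMap.inr ℝ ℝ E) (z u) :=
        HasFDerivAt.prodMk (hasFDerivAt_const u (z u)) (hasFDerivAt_id (z u))
      exact hG.comp (z u) h2
    have hgrad : ∀ w : E, ⟪gradient (fun y => G (u, y)) (z u), w⟫
        = fderiv ℝ G (u, z u) (0, w) := by
      intro w
      rw [gradient, hspace.fderiv, InnerProductSpace.toDual_symm_apply]
      rfl
    have hzero : fderiv ℝ G (u, z u) (1, v) = 0 := by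
      have h3 : ((1 : ℝ), v) = ((1 : ℝ), (0 : E)) + ((0 : ℝ), v) := by simp
      rw [h3, map_add]
      have := hcons u (z u)
      rw [htime', hgrad v] at this
      linarith
    rwa [hzero] at hcomp
  have hdiff : Differentiable ℝ (fun r => G (r, z r)) :=
    fun u => (key u).differentiableAt
  have hderiv : ∀ u, deriv (fun r => G (r, z r)) u = 0 := fun u => (key u).deriv
  exact is_const_of_deriv_eq_zero hdiff hderiv s t
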